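/- Let G be an undirected graph on {1,…,N} with closed neighborhoods 𝒩_i, and let q_1,…,q_N ≥ 0 with Σ_{i=1}^N q_i = 1 and Q_i := Σ_{j ∈ 𝒩_i} q_j > 0 for all i. Then Σ_{j=1}^N q_j √( Σ_{i ∈ 𝒩_j} q_i / Q_i² ) ≤ √( Σ_{i=1}^N q_i / Q_i ). -/

import Mathlib

/-- Jensen plus index-swap step of Theorem 3 (second claim):
`Σ_j q_j √(Σ_{i∈𝒩_j} q_i/Q_i²) ≤ √(Σ_i q_i/Q_i)`. -/
theorem stmt_10 (N : ℕ)
    (𝒩 : Fin N → Finset (Fin N))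
    (hself : ∀ i, i ∈ 𝒩 i)
    (hsym : ∀ i j : Fin N, j ∈ 𝒩 i ↔ i ∈ 𝒩 j)
    (q : Fin N → ℝ) (hq0 : ∀ i, 0 ≤ q i) (hq1 : ∑ i : Fin N, q i = 1)
    (hQ : ∀ i : Fin N, 0 < ∑ j ∈ 𝒩 i, q j) :
    ∑ j : Fin N, q j * Real.sqrt (∑ i ∈ 𝒩 j, q i / (∑ j' ∈ 𝒩 i, q j') ^ 2)
      ≤ Real.sqrt (∑ i : Fin N, q i / (∑ j ∈ 𝒩 i, q j)) := by
  set x : Fin N → ℝ := fun j => ∑ i ∈ 𝒩 j, q i / (∑ j' ∈ 𝒩 i, q j') ^ 2 with hx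
  have hx0 : ∀ j, 0 ≤ x j := fun j =>
    Finset.sum_nonneg fun i _ => div_nonneg (hq0 i) (sq_nonneg _)
  -- swap identity
  have hswap : ∑ j : Fin N, q j * x j = ∑ i : Fin N, q i / (∑ j ∈ 𝒩 i, q j) := by
    have h1 : ∑ j : Fin N, q j * x j
        = ∑ j : Fin N, ∑ i ∈ 𝒩 j, q j * (q i / (∑ j' ∈ 𝒩 i, q j') ^ 2) := by
      simp [hx, Finset.mul_sum]
    rw [h1, Finset.sum_comm' (s' := 𝒩) (t' := Finset.univ)
      (fun j i => by simp [hsym j i])]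
    refine Finset.sum_congr rfl fun i _ => ?_
    rw [← Finset.sum_mul]
    rw [div_eq_mul_one_div (q i), mul_comm (q i), ← mul_assoc]
    have hQi := (hQ i).ne'
    field_simp
  -- Cauchy-Schwarz: (Σ q_j √(x_j))² ≤ (Σ q_j)(Σ q_j x_j)
  have hcs : (∑ j : Fin N, q j * Real.sqrt (x j)) ^ 2
      ≤ ∑ j : Fin N, q j * x j := by
    have key := Finset.sum_mul_sq_le_sq_mul_sq Finset.univ
      (fun j => Real.sqrt (q j)) (fun j => Real.sqrt (q j) * Real.sqrt (x j))
    have e1 : ∀ j : Fin N, Real.sqrt (q j) * (Real.sqrt (q j) * Real.sqrt (x j))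
        = q j * Real.sqrt (x j) := by
      intro j
      rw [← mul_assoc, Real.mul_self_sqrt (hq0 j)]
    have e2 : ∀ j : Fin N, Real.sqrt (q j) ^ 2 = q j := fun j => Real.sq_sqrt (hq0 j)
    have e3 : ∀ j : Fin N, (Real.sqrt (q j) * Real.sqrt (x j)) ^ 2 = q j * x j := by
      intro j
      rw [mul_pow, Real.sq_sqrt (hq0 j), Real.sq_sqrt (hx0 j)]
    simp only [e1, e2, e3] at key
    simpa [hq1] using key
  have hnn : 0 ≤ ∑ j : Fin N, q j * Real.sqrt (x j) :=
    Finset.sum_nonneg fun j _ => mul_nonneg (hq0 j) (Real.sqrt_nonneg _)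
  calc ∑ j : Fin N, q j * Real.sqrt (x j)
      ≤ Real.sqrt (∑ j : Fin N, q j * x j) := by
        rw [← Real.sqrt_sq hnn]
        exact Real.sqrt_le_sqrt hcs
    _ = Real.sqrt (∑ i : Fin N, q i / (∑ j ∈ 𝒩 i, q j)) := by rw [hswap]
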